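/- Define one-forms ω_1, ..., ω_n on R^n (coordinates c_1, ..., c_n) recursively by ω_k = dc_k - Σ_{j=1}^{k-1} (j+1) c_j ω_{k-j}, and truncated vector fields L_j = ∂_j + Σ_{k=1}^{n-j}(k+1) c_k ∂_{j+k}. Then ω_m(L_k) = δ_{mk} (Kronecker delta) for all 1 ≤ m, k ≤ n; that is, {ω_1,...,ω_n} is the dual basis to {L_1,...,L_n}. -/

import Mathlib

/-- The one-forms `ω_k` (evaluated at a point `c` on a tangent vector `v`, both
given by their coordinates indexed by `ℕ`), defined recursively by
`ω_1 = dc_1` and `ω_k = dc_k - Σ_{j=1}^{k-1} (j+1) c_j ω_{k-j}`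
(the summation index is shifted: `j` ranges over `0, ..., k-2`). -/
noncomputable def omegaForm (c v : ℕ → ℝ) : ℕ → ℝ
  | 0 => v 0
  | (k + 1) => v (k + 1) -
      ∑ j ∈ Finset.range k, ((j : ℝ) + 2) * c (j + 1) * omegaForm c v (k - j)
  termination_by k => k
  decreasing_by omega

/-- The coordinates (in the basis `∂_1, ..., ∂_n`) of the truncated Kirillov
vector field `L_j = ∂_j + Σ_{k=1}^{n-j} (k+1) c_k ∂_{j+k}` at the point `c`:
the component with index `i` is `1` if `i = j`, and `(i-j+1) c_{i-j}` if
`j < i ≤ n`. -/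
noncomputable def kirillovVec (n : ℕ) (c : ℕ → ℝ) (j : ℕ) : ℕ → ℝ :=
  fun i => (if i = j then 1 else 0) +
    (if j < i ∧ i ≤ n then (((i - j : ℕ) : ℝ) + 1) * c (i - j) else 0)

/-- `ω_m(L_k) = δ_{mk}` for all `1 ≤ m, k ≤ n`: the forms `{ω_1, ..., ω_n}` form
the dual basis to the truncated Kirillov fields `{L_1, ..., L_n}`. -/
theorem omega_dual_basis (n : ℕ) (c : ℕ → ℝ) (m k : ℕ)
    (hm : 1 ≤ m) (hmn : m ≤ n) (hk : 1 ≤ k) (hkn : k ≤ n) :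
    omegaForm c (kirillovVec n c k) m = if m = k then (1 : ℝ) else 0 := by
  induction m using Nat.strong_induction_on with
  | _ m ih =>
    match m, hm, hmn with
    | (s+1), _, hmn =>
      rw [omegaForm]
      have hsum : ∑ j ∈ Finset.range s,
          ((j : ℝ) + 2) * c (j + 1) * omegaForm c (kirillovVec n c k) (s - j)
          = ∑ j ∈ Finset.range s,
            (if j = s - k ∧ k ≤ s then ((j : ℝ) + 2) * c (j + 1) else 0) := by
        apply Finset.sum_congr rfl
        intro j hj
        rw [Finset.mem_range] at hj
        rw [ih (s - j) (by omega) (by omega) (by omega)]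
        by_cases h : s - j = k
        · have h2 : j = s - k ∧ k ≤ s := by omega
          rw [if_pos h, if_pos h2, mul_one]
        · have h2 : ¬(j = s - k ∧ k ≤ s) := by omega
          rw [if_neg h, if_neg h2, mul_zero]
      rw [hsum]
      by_cases hks : k ≤ s
      · simp only [hks, and_true]
        rw [Finset.sum_ite_eq' (Finset.range s) (s - k)
          (fun j => ((j : ℝ) + 2) * c (j + 1))]
        have hmem : s - k ∈ Finset.range s := Finset.mem_range.mpr (by omega)
        rw [if_pos hmem]
        have hne : s + 1 ≠ k := by omega
        rw [if_neg hne]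
        have hcond : k < s + 1 ∧ s + 1 ≤ n := ⟨by omega, hmn⟩
        have heq : s + 1 - k = (s - k) + 1 := by omega
        simp only [kirillovVec, if_neg hne, if_pos hcond, heq]
        push_cast
        ring
      · have hz : ∀ j ∈ Finset.range s, (if j = s - k ∧ k ≤ s then ((j : ℝ) + 2) * c (j + 1) else 0) = 0 := by
          intro j hj
          rw [if_neg (by tauto)]
        rw [Finset.sum_congr rfl hz, Finset.sum_const_zero]
        have hcond : ¬(k < s + 1 ∧ s + 1 ≤ n) := by omega
        simp only [kirillovVec, if_neg hcond]
        simp
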